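/- Let Q be the Ehrenfeucht–Mostowski type over A of a Lascar special sequence over A, and let φ(x,b) be a formula. Then there exists a realization J of Q which eventually determines φ(x,b), i.e. the limit truth value of φ(x,b) is the same along every A-indiscernible continuation of J. -/
import Mathlib


/- Background framework: we work in a big ("monster") model `M` of a complete
first-order theory, with tuples represented as functions `β → M`, and formulas with
parameters represented as `L.Formula (Fin n ⊕ β)`, where the `Fin n`-part is used for a
tuple of parameters and the `β`-part for the free variables. -/

open FirstOrder

universe u v w

namespace PaperNIP

variable (L : FirstOrder.Language.{u, u}) {M : Type u} [L.Structure M]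

/-- The sequence `I` of `β`-tuples, indexed by the linear order `O`, is
indiscernible over the set `A`: the type of a finite increasing subtuple over `A`
depends only on the order of the indices. -/
def IndiscOver (A : Set M) {O : Type*} [LinearOrder O] {β : Type*} (I : O → β → M) : Prop :=
  ∀ (m k : ℕ) (φ : L.Formula (Fin m ⊕ (Fin k × β))) (as : Fin m → M),
    (∀ t, as t ∈ A) →
    ∀ i j : Fin k → O, StrictMono i → StrictMono j →
      (φ.Realize (Sum.elim as fun p => I (i p.1) p.2) ↔
        φ.Realize (Sum.elim as fun p => I (j p.1) p.2))

/-- `I` is an indiscernible *set* over `A`: the type of a finite subtuple of (distinct)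
elements over `A` does not depend on the (order of the) indices at all. -/
def IndiscSetOver (A : Set M) {O : Type*} {β : Type*} (I : O → β → M) : Prop :=
  ∀ (m k : ℕ) (φ : L.Formula (Fin m ⊕ (Fin k × β))) (as : Fin m → M),
    (∀ t, as t ∈ A) →
    ∀ i j : Fin k → O, Function.Injective i → Function.Injective j →
      (φ.Realize (Sum.elim as fun p => I (i p.1) p.2) ↔
        φ.Realize (Sum.elim as fun p => I (j p.1) p.2))

/-- The theory of `M` is dependent (NIP): along any indiscernible sequence (with no last
element), the truth value of any formula (with parameters) is eventually constant. -/
def Dependent : Prop :=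
  ∀ (O : Type u) [LinearOrder O] [Nonempty O] [NoMaxOrder O] (r : ℕ) (I : O → Fin r → M),
    IndiscOver L (∅ : Set M) I →
    ∀ (n : ℕ) (φ : L.Formula (Fin n ⊕ Fin r)) (c : Fin n → M),
      ∃ i₀ : O, ∀ i j : O, i₀ ≤ i → i₀ ≤ j →
        (φ.Realize (Sum.elim c (I i)) ↔ φ.Realize (Sum.elim c (I j)))

/-- The set of elements appearing in the sequence `I`. -/
def seqSet {O : Type*} {β : Type*} (I : O → β → M) : Set M :=
  ⋃ i, Set.range (I i)

/-- The set of elements appearing in `I` strictly before the index `i`. -/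
def below {O : Type*} [LinearOrder O] {β : Type*} (I : O → β → M) (i : O) : Set M :=
  {x | ∃ j < i, ∃ t, I j t = x}

/-- The single (infinite) tuple obtained from a sequence of tuples. -/
def seqUncurry {O : Type*} {β : Type*} (I : O → β → M) : O × β → M :=
  fun p => I p.1 p.2

/-- The sequence `I` extended by one further element `c` (placed after all of `I`). -/
def consTop {O : Type*} {β : Type*} (I : O → β → M) (c : β → M) : WithTop O → β → M :=
  fun o => WithTop.recTopCoe c I o

/-- Concatenation of two sequences, indexed by the lexicographic sum of the orders. -/
def concatSeq {O O' : Type*} {β : Type*} (I : O → β → M) (J : O' → β → M) :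
    (O ⊕ₗ O') → β → M :=
  fun o => Sum.elim I J (ofLex o)

/-- `J` continues `I` over `A` : the concatenation `I ⌢ J` is `A`-indiscernible. -/
def Continues (A : Set M) {O O' : Type*} [LinearOrder O] [LinearOrder O'] {β : Type*}
    (I : O → β → M) (J : O' → β → M) : Prop :=
  IndiscOver L A (concatSeq I J)

/-- Membership in the global average type `Av(I, 𝔠)` of the sequence `I` :
`φ(x, b)` belongs to it iff `φ(x, b)` is eventually satisfied by the elements of `I`. -/
def AvMem {O : Type*} [LinearOrder O] {β : Type*} (I : O → β → M)
    (n : ℕ) (φ : L.Formula (Fin n ⊕ β)) (b : Fin n → M) : Prop :=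
  ∃ i₀ : O, ∀ i, i₀ ≤ i → φ.Realize (Sum.elim b (I i))

/-- Membership in the average type `Av(I, B)` of the sequence `I` over the set `B`. -/
def AvMemOver {O : Type*} [LinearOrder O] {β : Type*} (I : O → β → M) (B : Set M)
    (n : ℕ) (φ : L.Formula (Fin n ⊕ β)) (b : Fin n → M) : Prop :=
  (∀ t, b t ∈ B) ∧ AvMem L I n φ b

/-- Two tuples have the same type over `A`. -/
def SameTp (A : Set M) {β : Type*} (a b : β → M) : Prop :=
  ∀ (m : ℕ) (φ : L.Formula (Fin m ⊕ β)) (as : Fin m → M), (∀ t, as t ∈ A) →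
    (φ.Realize (Sum.elim as a) ↔ φ.Realize (Sum.elim as b))

/-- Two tuples have the same Lascar strong type over `A`: they are equivalent under the
transitive closure of the relation "being two distinct terms of an infinite
`A`-indiscernible sequence". -/
def SameLstp (A : Set M) {β : Type*} : (β → M) → (β → M) → Prop :=
  Relation.TransGen fun x y =>
    ∃ I : ℕ → β → M, IndiscOver L A I ∧ ∃ i j : ℕ, i ≠ j ∧ I i = x ∧ I j = y

/-- The sequences `I` (indexed by `O`) and `J` (indexed by `O'`) realize the same
Ehrenfeucht–Mostowski type over `A`. -/
def SameEM (A : Set M) {O O' : Type*} [LinearOrder O] [LinearOrder O'] {β : Type*}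
    (I : O → β → M) (J : O' → β → M) : Prop :=
  ∀ (m k : ℕ) (φ : L.Formula (Fin m ⊕ (Fin k × β))) (as : Fin m → M), (∀ t, as t ∈ A) →
    ∀ (i : Fin k → O) (j : Fin k → O'), StrictMono i → StrictMono j →
      (φ.Realize (Sum.elim as fun p => I (i p.1) p.2) ↔
        φ.Realize (Sum.elim as fun p => J (j p.1) p.2))

/-- A single formula `φ(x, b)` divides over `A`: there is an `A`-indiscernible sequence
of parameter tuples starting with `b` along which the family of instances of `φ` is
inconsistent (some finite subfamily is unsatisfiable). -/
def Divides (A : Set M) {n : ℕ} {β : Type*} (φ : L.Formula (Fin n ⊕ β))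
    (b : Fin n → M) : Prop :=
  ∃ bs : ℕ → Fin n → M, bs 0 = b ∧ IndiscOver L A bs ∧
    ∃ s : Finset ℕ, ¬ ∃ x : β → M, ∀ t ∈ s, φ.Realize (Sum.elim (bs t) x)

/-- The finite conjunction `⋀ i, φs i (x, bs i)` divides over `A`. -/
def FamilyDivides (A : Set M) {β : Type*} (k : ℕ) (ns : Fin k → ℕ)
    (φs : ∀ i, L.Formula (Fin (ns i) ⊕ β)) (bs : ∀ i, Fin (ns i) → M) : Prop :=
  ∃ Bs : ℕ → ∀ i, Fin (ns i) → M, Bs 0 = bs ∧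
    IndiscOver L A (fun t (p : Σ i, Fin (ns i)) => Bs t p.1 p.2) ∧
    ∃ s : Finset ℕ, ¬ ∃ x : β → M, ∀ t ∈ s, ∀ i, (φs i).Realize (Sum.elim (Bs t i) x)

/-- A single formula `φ(x, b)` forks over `A`: it implies (in the monster) a finite
disjunction of formulas each of which divides over `A`. -/
def Forks (A : Set M) {n : ℕ} {β : Type*} (φ : L.Formula (Fin n ⊕ β))
    (b : Fin n → M) : Prop :=
  ∃ (m : ℕ) (ms : Fin m → ℕ) (ψs : ∀ j, L.Formula (Fin (ms j) ⊕ β))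
    (cs : ∀ j, Fin (ms j) → M),
    (∀ j, Divides L A (ψs j) (cs j)) ∧
    ∀ x : β → M, φ.Realize (Sum.elim b x) → ∃ j, (ψs j).Realize (Sum.elim (cs j) x)

/-- A set of formulas (partial type) `P` in the variables `β` divides over `A` :
some finite conjunction of its members divides over `A`. -/
def SetDivides (A : Set M) {β : Type*}
    (P : ∀ n : ℕ, L.Formula (Fin n ⊕ β) → (Fin n → M) → Prop) : Prop :=
  ∃ (k : ℕ) (ns : Fin k → ℕ) (φs : ∀ i, L.Formula (Fin (ns i) ⊕ β))
    (bs : ∀ i, Fin (ns i) → M),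
    (∀ i, P (ns i) (φs i) (bs i)) ∧ FamilyDivides L A k ns φs bs

/-- A set of formulas (partial type) `P` in the variables `β` forks over `A` :
some finite conjunction of its members implies a finite disjunction of formulas
each dividing over `A`. -/
def SetForks (A : Set M) {β : Type*}
    (P : ∀ n : ℕ, L.Formula (Fin n ⊕ β) → (Fin n → M) → Prop) : Prop :=
  ∃ (k : ℕ) (ns : Fin k → ℕ) (φs : ∀ i, L.Formula (Fin (ns i) ⊕ β))
    (bs : ∀ i, Fin (ns i) → M),
    (∀ i, P (ns i) (φs i) (bs i)) ∧
    ∃ (m : ℕ) (ms : Fin m → ℕ) (ψs : ∀ j, L.Formula (Fin (ms j) ⊕ β))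
      (cs : ∀ j, Fin (ms j) → M),
      (∀ j, Divides L A (ψs j) (cs j)) ∧
      ∀ x : β → M, (∀ i, (φs i).Realize (Sum.elim (bs i) x)) →
        ∃ j, (ψs j).Realize (Sum.elim (cs j) x)

/-- The (complete) type of the tuple `a` over the set `B`, as a set of formulas. -/
def TpMem (B : Set M) {β : Type*} (a : β → M) :
    ∀ n : ℕ, L.Formula (Fin n ⊕ β) → (Fin n → M) → Prop :=
  fun _n φ b => (∀ t, b t ∈ B) ∧ φ.Realize (Sum.elim b a)

/-- A complete type over the set `B` in the variables `β`, finitely realized in the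
monster `M` (i.e. consistent). With `B = Set.univ` this is a *global* type. -/
structure TypeOver (B : Set M) (β : Type v) : Type (max u v) where
  mem : ∀ n : ℕ, L.Formula (Fin n ⊕ β) → (Fin n → M) → Prop
  params_mem : ∀ n φ b, mem n φ b → ∀ t, b t ∈ B
  finitely_realized :
    ∀ (k : ℕ) (ns : Fin k → ℕ) (φs : ∀ i, L.Formula (Fin (ns i) ⊕ β))
      (bs : ∀ i, Fin (ns i) → M), (∀ i, mem (ns i) (φs i) (bs i)) →
      ∃ x : β → M, ∀ i, (φs i).Realize (Sum.elim (bs i) x)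
  complete : ∀ n φ b, (∀ t, b t ∈ B) → mem n φ b ∨ mem n φ.not b

/-- The tuple `a` realizes the type `p`. -/
def RealizesOver {B : Set M} {β : Type*} (p : TypeOver L B β) (a : β → M) : Prop :=
  ∀ n φ b, p.mem n φ b → φ.Realize (Sum.elim b a)

/-- The tuple `a` realizes the set of formulas `P`. -/
def RealizesPred {β : Type*}
    (P : ∀ n : ℕ, L.Formula (Fin n ⊕ β) → (Fin n → M) → Prop) (a : β → M) : Prop :=
  ∀ n φ b, P n φ b → φ.Realize (Sum.elim b a)

/-- The tuple `a` realizes the restriction `p ↾ C` of the type `p` to parameters in `C`. -/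
def RealizesRestrict {B : Set M} {β : Type*} (p : TypeOver L B β) (C : Set M)
    (a : β → M) : Prop :=
  ∀ n φ b, (∀ t, b t ∈ C) → p.mem n φ b → φ.Realize (Sum.elim b a)

/-- The type `q` extends the type `p` (as sets of formulas). -/
def ExtendsT {B B' : Set M} {β : Type*} (q : TypeOver L B' β) (p : TypeOver L B β) : Prop :=
  ∀ n φ b, p.mem n φ b → q.mem n φ b

/-- The complete type of the tuple `a` over the set `B`, bundled. -/
def tpOver (B : Set M) {β : Type*} (a : β → M) : TypeOver L B β where
  mem := TpMem L B a
  params_mem := fun _ _ _ h => h.1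
  finitely_realized := fun _ _ _ _ h => ⟨a, fun i => (h i).2⟩
  complete := fun _n φ b hb => by
    by_cases hr : φ.Realize (Sum.elim b a)
    · exact Or.inl ⟨hb, hr⟩
    · exact Or.inr ⟨hb, by simpa [TpMem] using hr⟩

/-- A Morley (nonforking) sequence over `A`: an `A`-indiscernible sequence such that
`tp(a_i / A ∪ a_{<i})` does not fork over `A` for every `i`. -/
def MorleySeq (A : Set M) {O : Type*} [LinearOrder O] {β : Type*} (I : O → β → M) : Prop :=
  IndiscOver L A I ∧ ∀ i : O, ¬ SetForks L A (TpMem L (A ∪ below I i) (I i))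

/-- The (global or partial) type `P` Lascar-splits over `A`. -/
def LascarSplits (A : Set M) {β : Type*}
    (P : ∀ n : ℕ, L.Formula (Fin n ⊕ β) → (Fin n → M) → Prop) : Prop :=
  ∃ (n : ℕ) (φ : L.Formula (Fin n ⊕ β)) (b b' : Fin n → M),
    SameLstp L A b b' ∧ P n φ b ∧ P n φ.not b'

/-- The (global or partial) type `P` splits over `A`. -/
def Splits (A : Set M) {β : Type*}
    (P : ∀ n : ℕ, L.Formula (Fin n ⊕ β) → (Fin n → M) → Prop) : Prop :=
  ∃ (n : ℕ) (φ : L.Formula (Fin n ⊕ β)) (b b' : Fin n → M),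
    SameTp L A b b' ∧ P n φ b ∧ P n φ.not b'

/-- A bundled linearly ordered index type together with a sequence of `β`-tuples;
used to quantify over sequences of arbitrary order type. -/
structure LinSeq (N : Type u) (β : Type v) : Type (max (u + 1) v) where
  carrier : Type u
  [ord : LinearOrder carrier]
  seq : carrier → β → N

attribute [instance] LinSeq.ord

/-- `I` is a Lascar special (weakly special) sequence over `A`: it is `A`-indiscernible,
and any two realizations of its Lascar strong type over `A` have a common one-element
extension to an `A`-indiscernible sequence. -/
def LascarSpecial (A : Set M) {O : Type*} [LinearOrder O] {β : Type*} (I : O → β → M) : Prop :=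
  IndiscOver L A I ∧
  ∀ I₁ I₂ : O → β → M,
    SameLstp L A (seqUncurry I) (seqUncurry I₁) →
    SameLstp L A (seqUncurry I) (seqUncurry I₂) →
    ∃ c : β → M, IndiscOver L A (consTop I₁ c) ∧ IndiscOver L A (consTop I₂ c)

/-- The Ehrenfeucht–Mostowski type of `I` over `A` is special (Poizat): any two
realizations of it have a common one-element extension to an `A`-indiscernible sequence. -/
def SpecialEM (A : Set M) {O : Type*} [LinearOrder O] {β : Type*} (I : O → β → M) : Prop :=
  ∀ (S₁ S₂ : LinSeq M β), SameEM L A I S₁.seq → SameEM L A I S₂.seq →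
    ∃ c : β → M, IndiscOver L A (consTop S₁.seq c) ∧ IndiscOver L A (consTop S₂.seq c)

/-- The limit truth value of `φ(x, b)` along the sequence `J` is `v`. -/
def LimitVal {O : Type*} [LinearOrder O] {β : Type*} {n : ℕ} (J : O → β → M)
    (φ : L.Formula (Fin n ⊕ β)) (b : Fin n → M) (v : Bool) : Prop :=
  ∃ i₀ : O, ∀ i, i₀ ≤ i → (φ.Realize (Sum.elim b (J i)) ↔ v = true)

/-- `J` eventually determines `φ(x, b)` with value `v`: along every `A`-indiscernible
sequence (with no last element) continuing `J`, the limit truth value of `φ(x, b)`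
is `v`. -/
def EvDetermines (A : Set M) {O : Type*} [LinearOrder O] {β : Type*} {n : ℕ}
    (J : O → β → M) (φ : L.Formula (Fin n ⊕ β)) (b : Fin n → M) (v : Bool) : Prop :=
  ∀ S : LinSeq M β, Nonempty S.carrier → NoMaxOrder S.carrier →
    Continues L A J S.seq → LimitVal L S.seq φ b v

/-- Membership in the eventual type `Ev(I)` of a (Lascar special) sequence `I` over `A`:
`φ(x, b) ∈ Ev(I)` iff some sequence with the same Lascar strong type as `I` over `A`
has an indiscernible continuation which eventually determines `φ(x, b)` with limit
value "true". -/
def EvMem (A : Set M) {O : Type*} [LinearOrder O] {β : Type*} (I : O → β → M)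
    (n : ℕ) (φ : L.Formula (Fin n ⊕ β)) (b : Fin n → M) : Prop :=
  ∃ I' : O → β → M, SameLstp L A (seqUncurry I) (seqUncurry I') ∧
    ∃ S : LinSeq M β, Nonempty S.carrier ∧ NoMaxOrder S.carrier ∧
      Continues L A I' S.seq ∧ EvDetermines L A (concatSeq I' S.seq) φ b true

/-- The type `P ∈ S(A)` is generically stable: some Morley sequence over `A` of
realizations of `P` is an indiscernible set over `A`. -/
def GenStable (A : Set M) {β : Type*}
    (P : ∀ n : ℕ, L.Formula (Fin n ⊕ β) → (Fin n → M) → Prop) : Prop :=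
  ∃ J : ℕ → β → M, MorleySeq L A J ∧ (∀ i, RealizesPred L P (J i)) ∧ IndiscSetOver L A J

/-- `S` is (the underlying set of) an elementary submodel of the monster `M`
(via the Tarski–Vaught test). -/
def ElemSubmodel (S : Set M) : Prop :=
  S.Nonempty ∧
  ∀ (n : ℕ) (φ : L.Formula (Fin n ⊕ Fin 1)) (b : Fin n → M), (∀ t, b t ∈ S) →
    (∃ x : M, φ.Realize (Sum.elim b fun _ => x)) →
    ∃ x ∈ S, φ.Realize (Sum.elim b fun _ => x)

/-- `N` is `κ`-saturated (as a subset of the monster): every consistent type over a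
subset of `N` of cardinality `< κ` is realized in `N`. -/
def SatOver (N : Set M) (κ : Cardinal.{u}) : Prop :=
  ∀ B : Set M, B ⊆ N → Cardinal.mk B < κ →
    ∀ (r : ℕ) (q : TypeOver L B (Fin r)),
      ∃ a : Fin r → M, (∀ i, a i ∈ N) ∧ RealizesOver L q a

/-- `p ∈ S(B)` is a heir of its restriction to `MS`: every formula (over `MS`) with
parameters in `B` belonging to `p` also occurs in `p` with parameters from `MS`. -/
def Heir (MS : Set M) {B : Set M} {β : Type*} (p : TypeOver L B β) : Prop :=
  ∀ n φ b, p.mem n φ b → ∃ b' : Fin n → M, (∀ t, b' t ∈ MS) ∧ p.mem n φ b'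

/-- `p` is a coheir of its restriction to `MS`: `p` is finitely satisfiable in `MS`. -/
def Coheir (MS : Set M) {B : Set M} {β : Type*} (p : TypeOver L B β) : Prop :=
  ∀ (k : ℕ) (ns : Fin k → ℕ) (φs : ∀ i, L.Formula (Fin (ns i) ⊕ β))
    (bs : ∀ i, Fin (ns i) → M),
    (∀ i, p.mem (ns i) (φs i) (bs i)) →
    ∃ x : β → M, (∀ t, x t ∈ MS) ∧ ∀ i, (φs i).Realize (Sum.elim (bs i) x)

/-- `p ∈ S(B)` is a strictly nondividing extension of `p ↾ A` : `p` does not divide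
over `A` (equivalently, `tp(a/B)` does not divide over `A` for `a ⊨ p`), and for every
realization `a` of `p` the type of every tuple from `B` over `A ∪ a` does not divide
over `A` (i.e. `tp(B / A ∪ a)` does not divide over `A`). -/
def StrictlyNonDividing (A : Set M) {B : Set M} {β : Type*} (p : TypeOver L B β) : Prop :=
  (¬ SetDivides L A p.mem) ∧
  ∀ a : β → M, RealizesOver L p a →
    ∀ (m : ℕ) (c : Fin m → M), (∀ t, c t ∈ B) →
      ¬ SetDivides L A (TpMem L (A ∪ Set.range a) c)

/-- `p ∈ S(B)` is strictly free (strictly nonforking) over `A`: some global extension of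
`p` is a strictly nondividing extension of `p ↾ A`. -/
def StrictlyFree (A : Set M) {B : Set M} {β : Type*} (p : TypeOver L B β) : Prop :=
  ∃ q : TypeOver L (Set.univ : Set M) β, ExtendsT L q p ∧ StrictlyNonDividing L A q

/-- A strict Morley sequence in the type `p ∈ S(A)` : an `A`-indiscernible sequence of
realizations of `p` such that `tp(a_i / A ∪ a_{<i})` is strictly free over `A` for
every `i`. -/
def StrictMorleyIn (A : Set M) {β : Type*} (p : TypeOver L A β) {O : Type*}
    [LinearOrder O] (I : O → β → M) : Prop :=
  IndiscOver L A I ∧ (∀ i, RealizesOver L p (I i)) ∧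
  ∀ i : O, StrictlyFree L A (tpOver L (A ∪ below I i) (I i))


/-! ### Auxiliary machinery for Statement 5 -/

section Statement5Aux
set_option linter.unusedSectionVars false

open Sum

lemma indisc_empty_of {A : Set M} {O : Type*} [LinearOrder O] {β : Type*} {I : O → β → M}
    (h : IndiscOver L A I) : IndiscOver L (∅ : Set M) I :=
  fun m k φ as hmem => h m k φ as (fun t => ((Set.notMem_empty _) (hmem t)).elim)

lemma indisc_concat_right {A : Set M} {O O' : Type*} [LinearOrder O] [LinearOrder O']
    {β : Type*} {I : O → β → M} {J : O' → β → M}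
    (h : IndiscOver L A (concatSeq I J)) : IndiscOver L A J := by
  intro m k φ as hmem i j hi hj
  exact h m k φ as hmem (fun t => toLex (Sum.inr (i t))) (fun t => toLex (Sum.inr (j t)))
    (fun a b hab => Sum.Lex.inr_lt_inr_iff.mpr (hi hab))
    (fun a b hab => Sum.Lex.inr_lt_inr_iff.mpr (hj hab))

lemma exists_strictMono_fin {α : Type*} [Preorder α] [Nonempty α] [NoMaxOrder α] (k : ℕ) :
    ∃ f : Fin k → α, StrictMono f := by
  obtain ⟨g, hg⟩ := Nat.exists_strictMono α
  exact ⟨fun t => g t.1, fun a b hab => hg hab⟩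

lemma exists_limitVal (hT : Dependent L (M := M)) {r : ℕ} {O' : Type u} [LinearOrder O']
    [Nonempty O'] [NoMaxOrder O'] {S : O' → Fin r → M}
    (hS : IndiscOver L (∅ : Set M) S) (n : ℕ) (φ : L.Formula (Fin n ⊕ Fin r))
    (b : Fin n → M) : ∃ v : Bool, LimitVal L S φ b v := by
  obtain ⟨i₀, hc⟩ := hT O' r S hS n φ b
  by_cases hv : φ.Realize (Sum.elim b (S i₀))
  · exact ⟨true, i₀, fun i hi => iff_of_true ((hc i i₀ hi le_rfl).mpr hv) rfl⟩
  · exact ⟨false, i₀, fun i hi =>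
      iff_of_false (fun hr => hv ((hc i i₀ hi le_rfl).mp hr)) (by simp)⟩

variable {A : Set M} {r : ℕ} {O : Type u} [LinearOrder O] [Nonempty O] [NoMaxOrder O]
  {I : O → Fin r → M} {n : ℕ} {φ : L.Formula (Fin n ⊕ Fin r)} {b : Fin n → M}

/-- A state in the recursive construction: an `A`-indiscernible sequence realizing the
EM type of `I`, with nonempty index order without maximum. -/
structure GSeq (A : Set M) (I : O → Fin r → M) : Type (u + 1) where
  S : LinSeq M (Fin r)
  ne : Nonempty S.carrier
  nm : NoMaxOrder S.carrier
  ind : IndiscOver L A S.seq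
  em : SameEM L A I S.seq

variable (hT : Dependent L (M := M)) (hI : IndiscOver L A I)
  (hneg : ∀ S : LinSeq M (Fin r), Nonempty S.carrier → NoMaxOrder S.carrier →
      SameEM L A I S.seq → ∀ v : Bool, ¬ EvDetermines L A S.seq φ b v)

/-- The base state: `I` itself. -/
def GSeq.base : GSeq L A I :=
  ⟨⟨O, I⟩, inferInstance, inferInstance, hI,
    fun m k ψ as h i j hi hj => hI m k ψ as h i j hi hj⟩

include hT hneg in
lemma GSeq.chunk_ex (g : GSeq L A I) (v : Bool) :
    ∃ S' : LinSeq M (Fin r), Nonempty S'.carrier ∧ NoMaxOrder S'.carrier ∧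
      Continues L A g.S.seq S'.seq ∧ LimitVal L S'.seq φ b (!v) := by
  have h := hneg g.S g.ne g.nm g.em v
  unfold EvDetermines at h
  push_neg at h
  obtain ⟨S', hne, hnm, hcont, hnl⟩ := h
  haveI := hne; haveI := hnm
  have hisc : IndiscOver L (∅ : Set M) S'.seq :=
    indisc_empty_of L (indisc_concat_right L hcont)
  obtain ⟨v', hv'⟩ := exists_limitVal L hT hisc n φ b
  refine ⟨S', hne, hnm, hcont, ?_⟩
  have hvv : v' ≠ v := fun h => hnl (h ▸ hv')
  cases v <;> cases v' <;> simp_all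

/-- The next chunk: a continuation of `g` along which the limit value of `φ(x,b)`
is `!v`. -/
noncomputable def GSeq.chunk (g : GSeq L A I) (v : Bool) : LinSeq M (Fin r) :=
  (GSeq.chunk_ex L hT hneg g v).choose

lemma GSeq.chunk_ne (g : GSeq L A I) (v : Bool) :
    Nonempty (GSeq.chunk L hT hneg g v).carrier :=
  (GSeq.chunk_ex L hT hneg g v).choose_spec.1

lemma GSeq.chunk_nm (g : GSeq L A I) (v : Bool) :
    NoMaxOrder (GSeq.chunk L hT hneg g v).carrier :=
  (GSeq.chunk_ex L hT hneg g v).choose_spec.2.1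

lemma GSeq.chunk_cont (g : GSeq L A I) (v : Bool) :
    Continues L A g.S.seq (GSeq.chunk L hT hneg g v).seq :=
  (GSeq.chunk_ex L hT hneg g v).choose_spec.2.2.1

lemma GSeq.chunk_lim (g : GSeq L A I) (v : Bool) :
    LimitVal L (GSeq.chunk L hT hneg g v).seq φ b (!v) :=
  (GSeq.chunk_ex L hT hneg g v).choose_spec.2.2.2

/-- One step of the construction: append the chunk. -/
noncomputable def GSeq.step (g : GSeq L A I) (v : Bool) : GSeq L A I where
  S := ⟨g.S.carrier ⊕ₗ (GSeq.chunk L hT hneg g v).carrier,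
        concatSeq g.S.seq (GSeq.chunk L hT hneg g v).seq⟩
  ne := g.ne.elim fun x => ⟨toLex (Sum.inl x)⟩
  nm := by
    haveI := GSeq.chunk_ne L hT hneg g v
    haveI := GSeq.chunk_nm L hT hneg g v
    refine ⟨fun w => ?_⟩
    rcases hw : ofLex w with a | x
    · refine ⟨toLex (Sum.inr (Classical.arbitrary _)), ?_⟩
      rw [← toLex_ofLex w, hw]
      exact Sum.Lex.inl_lt_inr _ _
    · obtain ⟨x', hx'⟩ := exists_gt x
      refine ⟨toLex (Sum.inr x'), ?_⟩
      rw [← toLex_ofLex w, hw]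
      exact Sum.Lex.inr_lt_inr_iff.mpr hx'
  ind := GSeq.chunk_cont L hT hneg g v
  em := by
    intro m k ψ as hmem i j hi hj
    haveI := g.ne; haveI := g.nm
    obtain ⟨f, hf⟩ := exists_strictMono_fin (α := g.S.carrier) k
    have h1 := g.em m k ψ as hmem i f hi hf
    have h2 := (GSeq.chunk_cont L hT hneg g v) m k ψ as hmem
      (fun t => toLex (Sum.inl (f t))) j
      (fun a b hab => Sum.Lex.inl_lt_inl_iff.mpr (hf hab)) hj
    exact h1.trans h2

/-- The chain of states, alternating the requested limit value by parity. -/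
noncomputable def gchain : ℕ → GSeq L A I := fun k =>
  Nat.rec (GSeq.base L hI) (fun k g => GSeq.step L hT hneg g (decide (Even k))) k

/-- The `k`-th chunk appended. -/
noncomputable def gCk (k : ℕ) : LinSeq M (Fin r) :=
  GSeq.chunk L hT hneg (gchain L hT hI hneg k) (decide (Even k))

/-- The index order of the colimit sequence. -/
abbrev gW : Type u := O ⊕ₗ (Σₗ k : ℕ, (gCk L hT hI hneg k).carrier)

/-- The colimit sequence itself. -/
noncomputable def gWseq : gW L hT hI hneg → Fin r → M := fun w =>
  Sum.elim I (fun p => (gCk L hT hI hneg p.1).seq p.2) (ofLex w)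

/-- The "level" of an element of the colimit order. -/
def gLev : gW L hT hI hneg → ℕ := fun w =>
  Sum.elim (fun _ => 0) (fun p => p.1 + 1) (ofLex w)

/-- Embedding of the `k`-th stage into the colimit order. -/
noncomputable def gEmb : ∀ k : ℕ, (gchain L hT hI hneg k).S.carrier → gW L hT hI hneg :=
  fun k => Nat.rec (motive := fun k => (gchain L hT hI hneg k).S.carrier → gW L hT hI hneg)
    (fun o => toLex (Sum.inl o))
    (fun k ih w => Sum.elim ih (fun x => toLex (Sum.inr ⟨k, x⟩)) (ofLex w)) k


lemma gEmb_succ_inl (k : ℕ) (w : (gchain L hT hI hneg k).S.carrier) :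
    gEmb L hT hI hneg (k+1) (toLex (Sum.inl w)) = gEmb L hT hI hneg k w := rfl

lemma gEmb_succ_inr (k : ℕ) (x : (gCk L hT hI hneg k).carrier) :
    gEmb L hT hI hneg (k+1) (toLex (Sum.inr x)) = toLex (Sum.inr ⟨k, x⟩) := rfl

lemma stage_cases (k : ℕ) (w : (gchain L hT hI hneg (k+1)).S.carrier) :
    (∃ a : (gchain L hT hI hneg k).S.carrier, w = toLex (Sum.inl a)) ∨
    (∃ x : (gCk L hT hI hneg k).carrier, w = toLex (Sum.inr x)) := by
  rcases hw : (ofLex w : (gchain L hT hI hneg k).S.carrier ⊕ (gCk L hT hI hneg k).carrier)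
      with a | x
  · exact Or.inl ⟨a, (toLex_ofLex w).symm.trans (congrArg toLex hw)⟩
  · exact Or.inr ⟨x, (toLex_ofLex w).symm.trans (congrArg toLex hw)⟩

lemma gW_cases (w : gW L hT hI hneg) :
    (∃ a : O, w = toLex (Sum.inl a)) ∨
    (∃ p : Σ k : ℕ, (gCk L hT hI hneg k).carrier, w = toLex (Sum.inr p)) := by
  rcases hw : (ofLex w : O ⊕ Σ k : ℕ, (gCk L hT hI hneg k).carrier) with a | p
  · exact Or.inl ⟨a, (toLex_ofLex w).symm.trans (congrArg toLex hw)⟩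
  · exact Or.inr ⟨p, (toLex_ofLex w).symm.trans (congrArg toLex hw)⟩

lemma gLev_inl (a : O) : gLev L hT hI hneg (toLex (Sum.inl a)) = 0 := rfl

lemma gLev_inr (p : Σ k : ℕ, (gCk L hT hI hneg k).carrier) :
    gLev L hT hI hneg (toLex (Sum.inr p)) = p.1 + 1 := rfl

lemma gLev_emb (k : ℕ) : ∀ w, gLev L hT hI hneg (gEmb L hT hI hneg k w) ≤ k := by
  induction k with
  | zero => intro w; exact le_rfl
  | succ k ih =>
    intro w
    obtain ⟨a, rfl⟩ | ⟨x, rfl⟩ := stage_cases L hT hI hneg k w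
    · exact (ih a).trans (Nat.le_succ k)
    · exact le_rfl

lemma glt_inr {w : gW L hT hI hneg} {k : ℕ} (h : gLev L hT hI hneg w ≤ k)
    (x : (gCk L hT hI hneg k).carrier) :
    w < toLex (Sum.inr (⟨k, x⟩ : Σ k : ℕ, (gCk L hT hI hneg k).carrier)) := by
  obtain ⟨a, rfl⟩ | ⟨p, rfl⟩ := gW_cases L hT hI hneg w
  · exact Sum.Lex.sep _ _
  · exact Sum.Lex.inr (Sigma.Lex.left _ _ (Nat.lt_of_succ_le h))

lemma gEmb_strictMono (k : ℕ) : StrictMono (gEmb L hT hI hneg k) := by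
  induction k with
  | zero => exact fun a b h => Sum.Lex.inl_lt_inl_iff.mpr h
  | succ k ih =>
    intro w w' hlt
    obtain ⟨a, rfl⟩ | ⟨x, rfl⟩ := stage_cases L hT hI hneg k w <;>
      obtain ⟨a', rfl⟩ | ⟨x', rfl⟩ := stage_cases L hT hI hneg k w'
    · exact ih (Sum.Lex.inl_lt_inl_iff.mp hlt)
    · exact glt_inr L hT hI hneg (gLev_emb L hT hI hneg k a) x'
    · exact absurd hlt Sum.Lex.not_inr_lt_inl
    · exact Sum.Lex.inr (Sigma.Lex.right _ _ (Sum.Lex.inr_lt_inr_iff.mp hlt))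

lemma gEmb_seq (k : ℕ) :
    ∀ w, gWseq L hT hI hneg (gEmb L hT hI hneg k w) = (gchain L hT hI hneg k).S.seq w := by
  induction k with
  | zero => intro w; rfl
  | succ k ih =>
    intro w
    obtain ⟨a, rfl⟩ | ⟨x, rfl⟩ := stage_cases L hT hI hneg k w
    · exact ih a
    · rfl

lemma gEmb_surj (k : ℕ) :
    ∀ w : gW L hT hI hneg, gLev L hT hI hneg w ≤ k → ∃ w', gEmb L hT hI hneg k w' = w := by
  induction k with
  | zero =>
    intro w h
    obtain ⟨a, rfl⟩ | ⟨p, rfl⟩ := gW_cases L hT hI hneg w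
    · exact ⟨a, rfl⟩
    · have h2 : p.1 + 1 ≤ 0 := h
      exact absurd h2 (by omega)
  | succ k ih =>
    intro w h
    by_cases h' : gLev L hT hI hneg w ≤ k
    · obtain ⟨w', hw'⟩ := ih w h'
      exact ⟨toLex (Sum.inl w'), (gEmb_succ_inl L hT hI hneg k w').trans hw'⟩
    · obtain ⟨a, rfl⟩ | ⟨p, rfl⟩ := gW_cases L hT hI hneg w
      · exact absurd (Nat.zero_le k) h'
      · obtain ⟨j, x⟩ := p
        have h2 : j + 1 ≤ k + 1 := h
        have h3 : ¬ (j + 1 ≤ k) := h'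
        have hj : j = k := by omega
        subst hj
        exact ⟨toLex (Sum.inr x), rfl⟩

lemma gW_indisc : IndiscOver L A (gWseq L hT hI hneg) := by
  classical
  intro m k ψ as hmem i j hi hj
  obtain ⟨K, hkeyi, hkeyj⟩ : ∃ K : ℕ, (∀ t, gLev L hT hI hneg (i t) ≤ K) ∧
      (∀ t, gLev L hT hI hneg (j t) ≤ K) :=
    ⟨(Finset.univ.sup fun t : Fin k => gLev L hT hI hneg (i t)) ⊔
      (Finset.univ.sup fun t : Fin k => gLev L hT hI hneg (j t)),
      fun t => le_trans
        (Finset.le_sup (f := fun t => gLev L hT hI hneg (i t)) (Finset.mem_univ t)) le_sup_left,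
      fun t => le_trans
        (Finset.le_sup (f := fun t => gLev L hT hI hneg (j t)) (Finset.mem_univ t)) le_sup_right⟩
  choose i' hi' using fun t => gEmb_surj L hT hI hneg K (i t) (hkeyi t)
  choose j' hj' using fun t => gEmb_surj L hT hI hneg K (j t) (hkeyj t)
  have hsm := gEmb_strictMono L hT hI hneg K
  have hi'' : StrictMono i' := fun a b hab => by
    have h2 := hi hab
    rw [← hi' a, ← hi' b] at h2
    exact hsm.lt_iff_lt.mp h2
  have hj'' : StrictMono j' := fun a b hab => by
    have h2 := hj hab
    rw [← hj' a, ← hj' b] at h2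
    exact hsm.lt_iff_lt.mp h2
  have hmain := (gchain L hT hI hneg K).ind m k ψ as hmem i' j' hi'' hj''
  have e1 : (Sum.elim as fun p : Fin k × Fin r => gWseq L hT hI hneg (i p.1) p.2) =
      Sum.elim as fun p => (gchain L hT hI hneg K).S.seq (i' p.1) p.2 := by
    funext z
    cases z with
    | inl t => rfl
    | inr p =>
        have h3 := congrFun (gEmb_seq L hT hI hneg K (i' p.1)) p.2
        rw [hi' p.1] at h3
        exact h3
  have e2 : (Sum.elim as fun p : Fin k × Fin r => gWseq L hT hI hneg (j p.1) p.2) =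
      Sum.elim as fun p => (gchain L hT hI hneg K).S.seq (j' p.1) p.2 := by
    funext z
    cases z with
    | inl t => rfl
    | inr p =>
        have h3 := congrFun (gEmb_seq L hT hI hneg K (j' p.1)) p.2
        rw [hj' p.1] at h3
        exact h3
  rw [e1, e2]
  exact hmain

lemma gW_nonempty : Nonempty (gW L hT hI hneg) :=
  ⟨toLex (Sum.inl (Classical.arbitrary O))⟩

lemma gW_noMax : NoMaxOrder (gW L hT hI hneg) := by
  constructor
  intro w
  obtain ⟨a, rfl⟩ | ⟨p, rfl⟩ := gW_cases L hT hI hneg w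
  · haveI : Nonempty (gCk L hT hI hneg 0).carrier :=
      GSeq.chunk_ne L hT hneg (gchain L hT hI hneg 0) (decide (Even 0))
    exact ⟨toLex (Sum.inr ⟨0, Classical.arbitrary _⟩), Sum.Lex.sep _ _⟩
  · haveI : NoMaxOrder (gCk L hT hI hneg p.1).carrier :=
      GSeq.chunk_nm L hT hneg (gchain L hT hI hneg p.1) (decide (Even p.1))
    obtain ⟨y, hy⟩ := exists_gt p.2
    exact ⟨toLex (Sum.inr ⟨p.1, y⟩), Sum.Lex.inr (Sigma.Lex.right _ _ hy)⟩

lemma gCk_lim (k : ℕ) :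
    LimitVal L (gCk L hT hI hneg k).seq φ b (!(decide (Even k))) :=
  GSeq.chunk_lim L hT hneg (gchain L hT hI hneg k) (decide (Even k))

include hT hI hneg in
lemma gFalse : False := by
  classical
  haveI := gW_nonempty L hT hI hneg
  haveI := gW_noMax L hT hI hneg
  obtain ⟨i₀, hc⟩ := hT (gW L hT hI hneg) r (gWseq L hT hI hneg)
    (indisc_empty_of L (gW_indisc L hT hI hneg)) n φ b
  set N := gLev L hT hI hneg i₀ with hN
  have hodd : ¬ Even (2*N+1) := by rw [Nat.even_iff]; omega
  have heven : Even (2*N+2) := ⟨N+1, by ring⟩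
  obtain ⟨x₁, hx₁⟩ := gCk_lim L hT hI hneg (2*N+1)
  obtain ⟨x₂, hx₂⟩ := gCk_lim L hT hI hneg (2*N+2)
  have h₁ := hx₁ x₁ le_rfl
  have h₂ := hx₂ x₂ le_rfl
  rw [decide_eq_false hodd] at h₁
  rw [decide_eq_true heven] at h₂
  have hle₁ : i₀ ≤ toLex (Sum.inr (⟨2*N+1, x₁⟩ : Σ k : ℕ, (gCk L hT hI hneg k).carrier)) :=
    le_of_lt (glt_inr L hT hI hneg (by omega) x₁)
  have hle₂ : i₀ ≤ toLex (Sum.inr (⟨2*N+2, x₂⟩ : Σ k : ℕ, (gCk L hT hI hneg k).carrier)) :=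
    le_of_lt (glt_inr L hT hI hneg (by omega) x₂)
  have hiff := hc _ _ hle₁ hle₂
  have hv₁ : φ.Realize (Sum.elim b ((gCk L hT hI hneg (2*N+1)).seq x₁)) :=
    h₁.mpr (by simp)
  have hv₂ : ¬ φ.Realize (Sum.elim b ((gCk L hT hI hneg (2*N+2)).seq x₂)) := by
    intro hr
    simpa using h₂.mp hr
  exact hv₂ (hiff.mp hv₁)

end Statement5Aux

/-- Let `Q` be the EM type over `A` of a Lascar special sequence `I` over
`A`, and `φ(x, b)` a formula. Then some realization `J` of `Q` eventually determines
`φ(x, b)`: the limit truth value of `φ(x, b)` is the same along every `A`-indiscernible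
continuation of `J`. -/
theorem statement_5
    (hT : Dependent L (M := M))
    (A : Set M) (r : ℕ)
    (O : Type u) [LinearOrder O] [Nonempty O] [NoMaxOrder O]
    (I : O → Fin r → M) (hspec : LascarSpecial L A I)
    (n : ℕ) (φ : L.Formula (Fin n ⊕ Fin r)) (b : Fin n → M) :
    ∃ S : LinSeq M (Fin r), Nonempty S.carrier ∧ NoMaxOrder S.carrier ∧
      SameEM L A I S.seq ∧ ∃ v : Bool, EvDetermines L A S.seq φ b v := by
  by_contra h
  exact gFalse L hT hspec.1 (fun S h1 h2 h3 v hE => h ⟨S, h1, h2, h3, v, hE⟩)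

end PaperNIP
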